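/- Let Ω ⊂ ℝⁿ be a bounded measurable set, let Φ : ℝⁿ → [0,∞) be an n-dimensional N-function of class C¹ with Young conjugate Φ_•, let U : Ω → ℝⁿ be measurable with ∫_Ω Φ(U(x)) dx < ∞, and let V : Ω → ℝⁿ be measurable with ∫_Ω Φ(λ V(x)) dx < ∞ for every λ > 0. Then for every ε ∈ (0,1] one has ∫_Ω Φ_•(∇Φ((1−ε)U(x) + V(x))) dx < ∞. -/

import Mathlib

open MeasureTheory Filter Topology
open scoped RealInnerProductSpace ENNReal

/-- An `n`-dimensional (finite-valued) Young function: an even, convex function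
`Φ : ℝⁿ → [0,∞)` with `Φ(0) = 0` such that for every `t > 0` the sublevel set
`{ξ : Φ ξ < t}` is bounded and is a neighborhood of `0`. -/
structure IsYoungFunction {n : ℕ} (Φ : EuclideanSpace ℝ (Fin n) → ℝ) : Prop where
  nonneg : ∀ ξ, 0 ≤ Φ ξ
  even : ∀ ξ, Φ (-ξ) = Φ ξ
  convex : ConvexOn ℝ Set.univ Φ
  map_zero : Φ 0 = 0
  sublevel_bounded : ∀ t > 0, Bornology.IsBounded {ξ | Φ ξ < t}
  sublevel_mem_nhds : ∀ t > 0, {ξ | Φ ξ < t} ∈ 𝓝 (0 : EuclideanSpace ℝ (Fin n))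

/-- An `n`-dimensional `N`-function: a finite-valued Young function vanishing only
at `0`, with `Φ(ξ)/|ξ| → ∞` as `|ξ| → ∞` and `Φ(ξ)/|ξ| → 0` as `|ξ| → 0`. -/
structure IsNFunction {n : ℕ} (Φ : EuclideanSpace ℝ (Fin n) → ℝ)
    extends IsYoungFunction Φ : Prop where
  eq_zero : ∀ ξ, Φ ξ = 0 → ξ = 0
  tendsto_atTop : Tendsto (fun ξ => Φ ξ / ‖ξ‖)
    (Bornology.cobounded (EuclideanSpace ℝ (Fin n))) atTop
  tendsto_zero : Tendsto (fun ξ => Φ ξ / ‖ξ‖)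
    (𝓝[≠] (0 : EuclideanSpace ℝ (Fin n))) (𝓝 0)

/-- The Young conjugate `Φ_•(η) = sup_ξ (ξ·η − Φ(ξ))`, with values in `[0,∞]`
(the supremum is always nonnegative, since `ξ = 0` contributes `0`). -/
noncomputable def youngConj {n : ℕ} (Φ : EuclideanSpace ℝ (Fin n) → ℝ)
    (η : EuclideanSpace ℝ (Fin n)) : ℝ≥0∞ :=
  ⨆ ξ : EuclideanSpace ℝ (Fin n), ENNReal.ofReal (⟪ξ, η⟫ - Φ ξ)


/-- Gradient inequality for convex `C¹` functions:
`⟪∇Φ(ξ), ζ - ξ⟫ ≤ Φ(ζ) - Φ(ξ)`. -/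
lemma grad_convex_ineq' {n : ℕ} {Φ : EuclideanSpace ℝ (Fin n) → ℝ}
    (hconv : ConvexOn ℝ Set.univ Φ) (hC1 : ContDiff ℝ 1 Φ)
    (ξ ζ : EuclideanSpace ℝ (Fin n)) :
    ⟪gradient Φ ξ, ζ - ξ⟫ ≤ Φ ζ - Φ ξ := by
  set g : ℝ → ℝ := fun t => Φ (ξ + t • (ζ - ξ)) with hg
  have hgc : ConvexOn ℝ Set.univ g := by
    have h := hconv.comp_affineMap (AffineMap.lineMap ξ ζ : ℝ →ᵃ[ℝ] _)
    have : (AffineMap.lineMap ξ ζ : ℝ →ᵃ[ℝ] _) ⁻¹' Set.univ = Set.univ := by simp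
    rw [this] at h
    have e : Φ ∘ ⇑(AffineMap.lineMap ξ ζ : ℝ →ᵃ[ℝ] _) = g := by
      funext t
      simp [g, AffineMap.lineMap_apply, add_comm]
    rw [e] at h; exact h
  have hΦd : DifferentiableAt ℝ Φ ξ := (hC1.differentiable one_ne_zero) ξ
  have hfd := hΦd.hasGradientAt.hasFDerivAt
  have hline : HasDerivAt (fun t : ℝ => ξ + t • (ζ - ξ)) (ζ - ξ) 0 := by
    simpa using ((hasDerivAt_id (0 : ℝ)).smul_const (ζ - ξ)).const_add ξ
  have h0 : ξ + (0 : ℝ) • (ζ - ξ) = ξ := by simp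
  have hgd : HasDerivAt g (⟪gradient Φ ξ, ζ - ξ⟫) 0 := by
    have := (h0 ▸ hfd : HasFDerivAt Φ _ (ξ + (0:ℝ) • (ζ - ξ))).comp_hasDerivAt 0 hline
    simp [g, InnerProductSpace.toDual_apply_apply] at this ⊢
    exact this
  have hslope := hgc.le_slope_of_hasDerivAt (Set.mem_univ (0:ℝ)) (Set.mem_univ 1)
    zero_lt_one hgd
  rw [slope_def_field] at hslope
  have h1 : g 1 = Φ ζ := by simp [g]
  have h00 : g 0 = Φ ξ := by simp [g]
  rw [h1, h00] at hslope
  linarith [hslope]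

/-- Fenchel/Young bound: `Φ_•(∇Φ(ξ)) ≤ Φ(λξ)/(λ-1)` for `λ > 1`. -/
lemma youngConj_grad_le' {n : ℕ} {Φ : EuclideanSpace ℝ (Fin n) → ℝ}
    (hconv : ConvexOn ℝ Set.univ Φ) (hC1 : ContDiff ℝ 1 Φ)
    (hnn : ∀ ξ, 0 ≤ Φ ξ) (ξ : EuclideanSpace ℝ (Fin n)) {lam : ℝ} (hlam : 1 < lam) :
    youngConj Φ (gradient Φ ξ) ≤ ENNReal.ofReal (Φ (lam • ξ) / (lam - 1)) := by
  refine iSup_le fun ζ => ENNReal.ofReal_le_ofReal ?_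
  have hd : (0:ℝ) < lam - 1 := by linarith
  have h1 := grad_convex_ineq' hconv hC1 ξ ζ
  have h2 := grad_convex_ineq' hconv hC1 ξ (lam • ξ)
  rw [inner_sub_right] at h1
  have hsm : lam • ξ - ξ = (lam - 1) • ξ := by rw [sub_smul, one_smul]
  rw [hsm, real_inner_smul_right] at h2
  have hcomm : ⟪ζ, gradient Φ ξ⟫ = ⟪gradient Φ ξ, ζ⟫ := real_inner_comm _ _
  rw [le_div_iff₀ hd, hcomm]
  nlinarith [hnn ξ, mul_le_mul_of_nonneg_right h1 hd.le]

/-- If `Φ` is a `C¹` `n`-dimensional `N`-function, `U` belongs to the Orlicz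
class on a bounded measurable set `Ω`, and `V` satisfies `∫_Ω Φ(λV) dx < ∞`
for every `λ > 0`, then for every `ε ∈ (0,1]` one has
`∫_Ω Φ_•(∇Φ((1−ε)U + V)) dx < ∞`. -/
theorem conj_gradient_scaled_add_integrable {n : ℕ}
    (Ω : Set (EuclideanSpace ℝ (Fin n))) (hΩm : MeasurableSet Ω)
    (hΩb : Bornology.IsBounded Ω)
    (Φ : EuclideanSpace ℝ (Fin n) → ℝ) (hΦ : IsNFunction Φ)
    (hC1 : ContDiff ℝ 1 Φ)
    (U V : EuclideanSpace ℝ (Fin n) → EuclideanSpace ℝ (Fin n))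
    (hU : Measurable U) (hV : Measurable V)
    (hUΦ : ∫⁻ x in Ω, ENNReal.ofReal (Φ (U x)) < ⊤)
    (hVΦ : ∀ lam : ℝ, 0 < lam → ∫⁻ x in Ω, ENNReal.ofReal (Φ (lam • V x)) < ⊤)
    (ε : ℝ) (hε : ε ∈ Set.Ioc (0 : ℝ) 1) :
    ∫⁻ x in Ω, youngConj Φ (gradient Φ ((1 - ε) • U x + V x)) < ⊤ := by
  obtain ⟨hε0, hε1⟩ := hε
  have hconv := hΦ.convex
  have hnn := hΦ.nonneg
  set lam : ℝ := 1 + ε / 2 with hlamdef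
  have hlam : 1 < lam := by simp only [hlamdef]; linarith
  have hd : (0:ℝ) < lam - 1 := by linarith
  set a : ℝ := lam * (1 - ε) with hadef
  have ha0 : 0 ≤ a := by simp only [hadef, hlamdef]; nlinarith
  have hb : 0 < 1 - a := by simp only [hadef, hlamdef]; nlinarith
  set c : ℝ := lam / (1 - a) with hcdef
  have hc : 0 < c := div_pos (by linarith) hb
  have h1ac : (1 - a) * c = lam := by
    rw [hcdef]; field_simp
  have hpt : ∀ x, youngConj Φ (gradient Φ ((1 - ε) • U x + V x)) ≤
      ENNReal.ofReal (a / (lam - 1)) * ENNReal.ofReal (Φ (U x)) +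
      ENNReal.ofReal ((1 - a) / (lam - 1)) * ENNReal.ofReal (Φ (c • V x)) := by
    intro x
    refine (youngConj_grad_le' hconv hC1 hnn _ hlam).trans ?_
    have hcomb : lam • ((1 - ε) • U x + V x) = a • U x + (1 - a) • (c • V x) := by
      rw [smul_add, smul_smul, smul_smul, h1ac]
    rw [hcomb]
    have hcv := hconv.2 (Set.mem_univ (U x)) (Set.mem_univ (c • V x)) ha0 hb.le
      (by ring : a + (1 - a) = 1)
    simp only [smul_eq_mul] at hcv
    have hstep : Φ (a • U x + (1 - a) • (c • V x)) / (lam - 1) ≤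
        a / (lam - 1) * Φ (U x) + (1 - a) / (lam - 1) * Φ (c • V x) := by
      have he : a / (lam - 1) * Φ (U x) + (1 - a) / (lam - 1) * Φ (c • V x)
          = (a * Φ (U x) + (1 - a) * Φ (c • V x)) / (lam - 1) := by ring
      rw [he, div_le_div_iff_of_pos_right hd]
      exact hcv
    refine (ENNReal.ofReal_le_ofReal hstep).trans ?_
    rw [ENNReal.ofReal_add (mul_nonneg (div_nonneg ha0 hd.le) (hnn _))
      (mul_nonneg (div_nonneg hb.le hd.le) (hnn _)),
      ENNReal.ofReal_mul (div_nonneg ha0 hd.le),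
      ENNReal.ofReal_mul (div_nonneg hb.le hd.le)]
  calc ∫⁻ x in Ω, youngConj Φ (gradient Φ ((1 - ε) • U x + V x))
      ≤ ∫⁻ x in Ω, (ENNReal.ofReal (a / (lam - 1)) * ENNReal.ofReal (Φ (U x)) +
        ENNReal.ofReal ((1 - a) / (lam - 1)) * ENNReal.ofReal (Φ (c • V x))) :=
        lintegral_mono hpt
    _ = ENNReal.ofReal (a / (lam - 1)) * (∫⁻ x in Ω, ENNReal.ofReal (Φ (U x))) +
        ENNReal.ofReal ((1 - a) / (lam - 1)) * (∫⁻ x in Ω, ENNReal.ofReal (Φ (c • V x))) := by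
        have hPm : Measurable fun x => ENNReal.ofReal (Φ (U x)) :=
          ENNReal.measurable_ofReal.comp (hC1.continuous.measurable.comp hU)
        rw [lintegral_add_left (hPm.const_mul _),
          lintegral_const_mul' _ _ ENNReal.ofReal_ne_top,
          lintegral_const_mul' _ _ ENNReal.ofReal_ne_top]
    _ < ⊤ := by
        apply ENNReal.add_lt_top.2
        constructor
        · exact ENNReal.mul_lt_top ENNReal.ofReal_lt_top hUΦ
        · exact ENNReal.mul_lt_top ENNReal.ofReal_lt_top (hVΦ c hc)
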